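/- Let X ~ Bin(n,p) be a binomial random variable and t a natural number. Then Pr[X ≥ 2t] ≤ (Pr[X ≥ t])^2. -/

import Mathlib

/-- Probability mass function of a Binomial(n, p) random variable at value `j`. -/
def binomPMF (n : ℕ) (p : ℝ) (j : ℕ) : ℝ :=
  (n.choose j : ℝ) * p ^ j * (1 - p) ^ (n - j)

/-- Tail probability `Pr[X ≥ t]` for `X ~ Bin(n, p)`. -/
def binomTail (n : ℕ) (p : ℝ) (t : ℕ) : ℝ :=
  ∑ j ∈ Finset.Icc t n, binomPMF n p j


lemma hockey (b N : ℕ) : ∑ i ∈ Finset.range (N+1), i.choose b = (N+1).choose (b+1) := by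
  induction N with
  | zero =>
    cases b with
    | zero => simp
    | succ b => simpa using (Nat.choose_eq_zero_of_lt (by omega : (1:ℕ) < b+1+1)).symm
  | succ N ih =>
    rw [Finset.sum_range_succ, ih,
      show (N+1+1).choose (b+1) = (N+1).choose b + (N+1).choose (b+1) from
        Nat.choose_succ_succ (N+1) b]
    ring

lemma vand (m : ℕ) : ∀ a b : ℕ, ∑ j ∈ Finset.range (m+1), (j.choose a) * ((m-j).choose b)
    = (m+1).choose (a+b+1) := by
  induction m with
  | zero =>
    intro a b
    rw [Finset.sum_range_one]
    cases a with
    | zero =>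
      cases b with
      | zero => rfl
      | succ b =>
        rw [Nat.choose_eq_zero_of_lt (by omega : (0:ℕ) < b+1),
          Nat.choose_eq_zero_of_lt (by omega : (1:ℕ) < 0+(b+1)+1)]
        ring
    | succ a =>
      rw [Nat.choose_eq_zero_of_lt (by omega : (0:ℕ) < a+1),
        Nat.choose_eq_zero_of_lt (by omega : (1:ℕ) < a+1+b+1)]
      ring
  | succ m ih =>
    intro a b
    rw [Finset.sum_range_succ']
    simp only [Nat.succ_sub_succ, Nat.sub_zero]
    cases a with
    | zero =>
      simp only [Nat.choose_zero_right, one_mul]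
      have hr := Finset.sum_range_reflect (fun j => j.choose b) (m+1)
      simp only [Nat.add_sub_cancel] at hr
      rw [hr, hockey b m,
        show (m+1+1).choose (0+b+1) = (m+1).choose (0+b) + (m+1).choose (0+b+1) from
          Nat.choose_succ_succ (m+1) (0+b),
        Nat.zero_add]
      ring
    | succ a =>
      have h1 : ∑ j ∈ Finset.range (m+1), ((j+1).choose (a+1)) * ((m-j).choose b)
          = ∑ j ∈ Finset.range (m+1),
            (j.choose a * ((m-j).choose b) + j.choose (a+1) * ((m-j).choose b)) := by
        refine Finset.sum_congr rfl fun j _ => ?_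
        rw [show (j+1).choose (a+1) = j.choose a + j.choose (a+1) from Nat.choose_succ_succ j a]
        ring
      rw [h1, Finset.sum_add_distrib, ih a b, ih (a+1) b]
      have h2 : Nat.choose 0 (a+1) = 0 := rfl
      have h3 : a+1+b+1 = (a+b+1)+1 := by ring
      rw [h2, h3,
        show (m+1+1).choose ((a+b+1)+1) = (m+1).choose (a+b+1) + (m+1).choose ((a+b+1)+1) from
          Nat.choose_succ_succ (m+1) (a+b+1)]
      ring

variable {p : ℝ}

lemma pmf_nonneg (hp0 : 0 ≤ p) (hp1 : p ≤ 1) (n j : ℕ) : 0 ≤ binomPMF n p j := by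
  unfold binomPMF
  have : (0:ℝ) ≤ 1 - p := by linarith
  positivity

lemma tail_nonneg (hp0 : 0 ≤ p) (hp1 : p ≤ 1) (n t : ℕ) : 0 ≤ binomTail n p t :=
  Finset.sum_nonneg fun j _ => pmf_nonneg hp0 hp1 n j

lemma tail_zero (n : ℕ) : binomTail n p 0 = 1 := by
  have h : binomTail n p 0 = (p + (1-p))^n := by
    unfold binomTail binomPMF
    rw [show Finset.Icc 0 n = Finset.range (n+1) by ext x; simp [Nat.lt_succ_iff], add_pow]
    exact Finset.sum_congr rfl fun j _ => by ring
  rw [h]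
  norm_num

lemma tail_peel (n t : ℕ) : binomTail n p t = binomPMF n p t + binomTail n p (t+1) := by
  unfold binomTail
  by_cases h : t ≤ n
  · rw [← Finset.Ioc_insert_left h, Finset.sum_insert (by simp), ← Finset.Icc_add_one_left_eq_Ioc]
  · push_neg at h
    rw [Finset.Icc_eq_empty (by omega), Finset.Icc_eq_empty (by omega)]
    simp [binomPMF, Nat.choose_eq_zero_of_lt h]

lemma tail_rec (n t : ℕ) :
    binomTail (n+1) p (t+1) = binomTail n p (t+1) + p * binomPMF n p t := by
  have hmap : Finset.Icc (t+1) (n+1) = (Finset.Icc t n).map (addLeftEmbedding 1) := by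
    rw [Finset.map_add_left_Icc, Nat.add_comm 1 t, Nat.add_comm 1 n]
  have key : binomTail (n+1) p (t+1)
      = p * binomTail n p t + (1-p) * binomTail n p (t+1) := by
    unfold binomTail
    rw [hmap, Finset.sum_map]
    have step : ∀ i ∈ Finset.Icc t n, binomPMF (n+1) p (addLeftEmbedding 1 i)
        = p * binomPMF n p i + ((n.choose (i+1) : ℝ) * p^(i+1) * (1-p)^(n+1-(i+1))) := by
      intro i hi
      simp only [Finset.mem_Icc] at hi
      have hemb : (addLeftEmbedding 1 : ℕ ↪ ℕ) i = i + 1 := by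
        simp [addLeftEmbedding]; omega
      rw [hemb]
      unfold binomPMF
      rw [show (n+1).choose (i+1) = n.choose i + n.choose (i+1) from Nat.choose_succ_succ n i]
      have h1 : n + 1 - (i+1) = n - i := by omega
      rw [h1]
      push_cast
      ring
    rw [Finset.sum_congr rfl step, Finset.sum_add_distrib, ← Finset.mul_sum]
    congr 1
    -- second summand equals (1-p) * binomTail n p (t+1)
    have back : ∑ i ∈ Finset.Icc t n, ((n.choose (i+1) : ℝ) * p^(i+1) * (1-p)^(n+1-(i+1)))
        = ∑ j ∈ Finset.Icc (t+1) (n+1), ((n.choose j : ℝ) * p^j * (1-p)^(n+1-j)) := by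
      rw [hmap, Finset.sum_map]
      refine Finset.sum_congr rfl fun i hi => ?_
      have hemb : (addLeftEmbedding 1 : ℕ ↪ ℕ) i = i + 1 := by
        simp [addLeftEmbedding]; omega
      rw [hemb]
    rw [back]
    by_cases htn : t ≤ n
    · rw [Finset.sum_Icc_succ_top (by omega : t+1 ≤ n+1),
        Nat.choose_eq_zero_of_lt (by omega : n < n+1)]
      simp only [Nat.cast_zero, zero_mul, add_zero]
      rw [Finset.mul_sum]
      refine Finset.sum_congr rfl fun j hj => ?_
      simp only [Finset.mem_Icc] at hj
      unfold binomPMF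
      rw [show n + 1 - j = (n - j) + 1 by omega]
      ring
    · rw [Finset.Icc_eq_empty (by omega), Finset.Icc_eq_empty (by omega : ¬ t+1 ≤ n)]
      simp
  rw [key, tail_peel n t]
  ring



lemma tail_at_zero (t : ℕ) : binomTail 0 p (t+1) = 0 := by
  unfold binomTail
  rw [Finset.Icc_eq_empty (by omega)]
  simp

lemma tail_mono (hp0 : 0 ≤ p) (hp1 : p ≤ 1) (t : ℕ) :
    ∀ n m, m ≤ n → binomTail m p (t+1) ≤ binomTail n p (t+1) := by
  intro n
  induction n with
  | zero => intro m hm; rw [show m = 0 by omega]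
  | succ n ih =>
    intro m hm
    rcases eq_or_lt_of_le hm with h | h
    · rw [h]
    · refine (ih m (by omega)).trans ?_
      rw [tail_rec]
      have := mul_nonneg hp0 (pmf_nonneg hp0 hp1 n t)
      linarith

lemma negbin (t : ℕ) : ∀ n : ℕ, binomTail n p (t+1)
    = ∑ k ∈ Finset.Icc (t+1) n, ((k-1).choose t : ℝ) * p^(t+1) * (1-p)^(k-(t+1)) := by
  intro n
  induction n with
  | zero => rw [tail_at_zero, Finset.Icc_eq_empty (by omega), Finset.sum_empty]
  | succ n ih =>
    rw [tail_rec, ih]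
    by_cases ht : t ≤ n
    · rw [Finset.sum_Icc_succ_top (by omega : t+1 ≤ n+1)]
      congr 1
      unfold binomPMF
      rw [show n+1-1 = n from rfl, show n+1-(t+1) = n-t by omega]
      ring
    · rw [Finset.Icc_eq_empty (by omega : ¬ t+1 ≤ n),
        Finset.Icc_eq_empty (by omega : ¬ t+1 ≤ n+1)]
      simp [binomPMF, Nat.choose_eq_zero_of_lt (by omega : n < t)]

lemma vand' (t n : ℕ) :
    ∑ k ∈ Finset.Icc (t+1) n, (k-1).choose t * (n-k).choose t = n.choose (2*t+1) := by
  cases n with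
  | zero => rw [Finset.Icc_eq_empty (by omega), Finset.sum_empty,
      Nat.choose_eq_zero_of_lt (by omega)]
  | succ m =>
    have hmap : Finset.Icc (t+1) (m+1) = (Finset.Icc t m).map (addLeftEmbedding 1) := by
      rw [Finset.map_add_left_Icc, Nat.add_comm 1 t, Nat.add_comm 1 m]
    rw [hmap, Finset.sum_map]
    have step : ∀ j ∈ Finset.Icc t m,
        ((addLeftEmbedding 1 j) - 1).choose t * ((m+1) - (addLeftEmbedding 1 j)).choose t
        = j.choose t * (m-j).choose t := by
      intro j hj
      have hemb : (addLeftEmbedding 1 : ℕ ↪ ℕ) j = 1 + j := rfl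
      rw [hemb, show 1+j-1 = j by omega, show m+1-(1+j) = m-j by omega]
    rw [Finset.sum_congr rfl step]
    have hsub : Finset.Icc t m ⊆ Finset.range (m+1) := by
      intro x hx; simp only [Finset.mem_Icc] at hx; simp [Nat.lt_succ_iff]; omega
    rw [Finset.sum_subset hsub (by
      intro x hx hx'
      simp only [Finset.mem_range, Finset.mem_Icc, not_and, not_le] at hx hx'
      rw [Nat.choose_eq_zero_of_lt (by omega : x < t), zero_mul])]
    rw [vand m t t, show t+t+1 = 2*t+1 by ring]

lemma decomp (hp0 : 0 ≤ p) (hp1 : p ≤ 1) (t : ℕ) : ∀ n : ℕ, binomTail n p (2*t+2)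
    = ∑ k ∈ Finset.Icc (t+1) n,
        ((k-1).choose t : ℝ) * p^(t+1) * (1-p)^(k-(t+1)) * binomTail (n-k) p (t+1) := by
  intro n
  induction n with
  | zero =>
    rw [show 2*t+2 = (2*t+1)+1 by ring, tail_at_zero, Finset.Icc_eq_empty (by omega),
      Finset.sum_empty]
  | succ n ih =>
    rw [show 2*t+2 = (2*t+1)+1 by ring] at ih ⊢
    rw [tail_rec n (2*t+1), ih]
    by_cases ht : t ≤ n
    · rw [Finset.sum_Icc_succ_top (by omega : t+1 ≤ n+1)]
      rw [show n+1-(n+1) = 0 from by omega, tail_at_zero, mul_zero, add_zero]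
      have step : ∀ k ∈ Finset.Icc (t+1) n,
          ((k-1).choose t : ℝ) * p^(t+1) * (1-p)^(k-(t+1)) * binomTail (n+1-k) p (t+1)
          = ((k-1).choose t : ℝ) * p^(t+1) * (1-p)^(k-(t+1)) * binomTail (n-k) p (t+1)
            + ((k-1).choose t : ℝ) * (((n-k).choose t : ℝ))
              * (p^(2*t+2) * (1-p)^((k-(t+1)) + ((n-k)-t))) := by
        intro k hk
        simp only [Finset.mem_Icc] at hk
        rw [show n+1-k = (n-k)+1 by omega, tail_rec (n-k) t]
        unfold binomPMF
        rw [show (2*t+2) = (t+1)+(1+t) by ring, pow_add p (t+1) (1+t), pow_add p 1 t,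
          pow_add (1-p) (k-(t+1)) ((n-k)-t), pow_one]
        ring
      rw [Finset.sum_congr rfl step, Finset.sum_add_distrib]
      congr 1
      -- ∑ cross terms = p * binomPMF n p (2t+1)
      have step2 : ∀ k ∈ Finset.Icc (t+1) n,
          ((k-1).choose t : ℝ) * (((n-k).choose t : ℝ))
              * (p^(2*t+2) * (1-p)^((k-(t+1)) + ((n-k)-t)))
          = (((k-1).choose t * (n-k).choose t : ℕ) : ℝ)
              * (p^(2*t+2) * (1-p)^(n-(2*t+1))) := by
        intro k hk
        simp only [Finset.mem_Icc] at hk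
        by_cases hnk : t ≤ n - k
        · rw [show (k-(t+1)) + ((n-k)-t) = n-(2*t+1) by omega]
          push_cast; ring
        · rw [Nat.choose_eq_zero_of_lt (by omega : n-k < t)]
          push_cast; ring
      rw [Finset.sum_congr rfl step2, ← Finset.sum_mul, ← Nat.cast_sum, vand' t n]
      unfold binomPMF
      rw [show 2*t+2 = (2*t+1)+1 by ring, pow_add]
      ring
    · rw [Finset.Icc_eq_empty (by omega : ¬ t+1 ≤ n),
        Finset.Icc_eq_empty (by omega : ¬ t+1 ≤ n+1), Finset.sum_empty, Finset.sum_empty]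
      unfold binomPMF
      rw [Nat.choose_eq_zero_of_lt (by omega : n < 2*t+1)]
      simp

/-- For `X ~ Bin(n,p)` and any natural `t`, `Pr[X ≥ 2t] ≤ (Pr[X ≥ t])²`. -/
theorem binomTail_double_le_sq (n t : ℕ) (p : ℝ) (hp0 : 0 ≤ p) (hp1 : p ≤ 1) :
    binomTail n p (2 * t) ≤ (binomTail n p t) ^ 2 := by
  cases t with
  | zero =>
    rw [Nat.mul_zero, tail_zero]
    norm_num
  | succ s =>
    rw [show 2*(s+1) = 2*s+2 by ring, decomp hp0 hp1 s n]
    have hq : (0:ℝ) ≤ 1 - p := by linarith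
    have hrhs : (binomTail n p (s+1))^2
        = ∑ k ∈ Finset.Icc (s+1) n,
            ((k-1).choose s : ℝ) * p^(s+1) * (1-p)^(k-(s+1)) * binomTail n p (s+1) := by
      rw [← Finset.sum_mul, ← negbin s n]
      ring
    rw [hrhs]
    refine Finset.sum_le_sum fun k hk => ?_
    refine mul_le_mul_of_nonneg_left ?_ (by positivity)
    exact tail_mono hp0 hp1 s n (n-k) (by omega)
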